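/- Let X = {0,1}^ω be the Cantor space, x a fixed injective enumeration of the finitely supported elements of X with x_0 the identically-zero sequence, and let W be a nonempty subset of X such that the ideal I_W has the hereditary Baire property. Then the following are equivalent: (i) W is not closed in X; (ii) ∅×Fin ≤_RB I_W; (iii) I_W, viewed as a subset of the Cantor space via characteristic functions, is Π⁰₃-hard; (iv) every Σ⁰₂ (Fσ) subset of X belongs to 𝓛_X(I_W). -/

import Mathlib

open Set Topology MeasureTheory

/-- An ideal on `Z`: a family of subsets of `Z` closed under subsets and finite unions. -/
def IsIdeal {Z : Type*} (I : Set (Set Z)) : Prop :=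
  (∀ A B : Set Z, A ⊆ B → B ∈ I → A ∈ I) ∧ ∀ A B : Set Z, A ∈ I → B ∈ I → A ∪ B ∈ I

/-- An ideal is admissible if `Z ∉ I` and `I` contains all finite sets. -/
def IsAdmissible {Z : Type*} (I : Set (Set Z)) : Prop :=
  (Set.univ : Set Z) ∉ I ∧ ∀ A : Set Z, A.Finite → A ∈ I

/-- The subsequence of `x` indexed by the (infinite) set `A` converges to `η`:
all but finitely many of the indices in `A` give values inside any neighbourhood of `η`. -/
def ConvAlong {Z X : Type*} [TopologicalSpace X] (x : Z → X) (A : Set Z) (η : X) : Prop :=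
  ∀ U ∈ nhds η, {n ∈ A | x n ∉ U}.Finite

/-- The set `Λ_x(I)` of `I`-limit points of the sequence `x`. -/
def LambdaSet {Z X : Type*} [TopologicalSpace X] (x : Z → X) (I : Set (Set Z)) : Set X :=
  {η | ∃ A : Set Z, A ∉ I ∧ A.Infinite ∧ ConvAlong x A η}

/-- The family `𝓛_X(I)` of all sets of `I`-limit points of sequences in `X`, plus `∅`. -/
def LimitFamily (Z : Type*) (X : Type*) [TopologicalSpace X] (I : Set (Set Z)) : Set (Set X) :=
  {S | ∃ x : Z → X, S = LambdaSet x I} ∪ {∅}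

/-- The Fubini product of two ideals. -/
def FubiniProd {Z W : Type*} (I : Set (Set Z)) (J : Set (Set W)) : Set (Set (Z × W)) :=
  {S | {n : Z | {k : W | (n, k) ∈ S} ∉ J} ∈ I}

/-- The ideal `Fin` of finite subsets. -/
def FinIdeal (Z : Type*) : Set (Set Z) := {A : Set Z | A.Finite}

/-- Identification of a family of subsets of `Z` with a subset of the Cantor space
`Z → Bool` via characteristic functions. -/
def chiSet {Z : Type*} (I : Set (Set Z)) : Set (Z → Bool) :=
  {f | {n : Z | f n = true} ∈ I}

/-- Finite Borel pointclasses: `SigmaClass X n` is `Σ⁰_n` for `n ≥ 1`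
(`Σ⁰₁` = open sets, `Σ⁰_{n+1}` = countable unions of complements of `Σ⁰_n` sets). -/
def SigmaClass (X : Type*) [TopologicalSpace X] : ℕ → Set (Set X)
  | 0 => ∅
  | 1 => {s | IsOpen s}
  | (n + 2) => {s | ∃ f : ℕ → Set X, (∀ k, (f k)ᶜ ∈ SigmaClass X (n + 1)) ∧ s = ⋃ k, f k}

/-- `PiClass X n` is `Π⁰_n`: complements of `Σ⁰_n` sets. -/
def PiClass (X : Type*) [TopologicalSpace X] (n : ℕ) : Set (Set X) :=
  {s | sᶜ ∈ SigmaClass X n}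

/-- Baire property: differs from an open set by a meager set. -/
def HasBP {α : Type*} [TopologicalSpace α] (s : Set α) : Prop :=
  ∃ u : Set α, IsOpen u ∧ IsMeagre (symmDiff s u)

/-- Hereditary Baire property of an ideal on `ω`. -/
def HereditaryBP (I : Set (Set ℕ)) : Prop :=
  ∀ A : Set ℕ, A ∉ I → HasBP (chiSet {S : Set ℕ | ∃ T ∈ I, S = T ∩ A})

/-- Simply analytic subset of a topological space: the projection of a Borel subset of
`X × Y` for some uncountable Polish space `Y`. -/
def SAnalytic {X : Type*} [TopologicalSpace X] (A : Set X) : Prop :=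
  ∃ (Y : Type) (tY : TopologicalSpace Y), @PolishSpace Y tY ∧ ¬Countable Y ∧
    ∃ B : Set (X × Y),
      MeasurableSet[@borel (X × Y) (@instTopologicalSpaceProd X Y _ tY)] B ∧
      A = Prod.fst '' B

/-- `P⁺`-ideal. -/
def PPlusIdeal (I : Set (Set ℕ)) : Prop :=
  ∀ A : ℕ → Set ℕ, Antitone A → (∀ n, A n ∉ I) →
    ∃ B : Set ℕ, B ∉ I ∧ ∀ n, (B \ A n).Finite

/-- `P`-ideal. -/
def PIdeal (I : Set (Set ℕ)) : Prop :=
  ∀ A : ℕ → Set ℕ, (∀ n, A n ∈ I) → ∃ B ∈ I, ∀ n, (A n \ B).Finite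

/-- `L_{x↾A}`: the set of limit points of the subsequence of `x` indexed by `A`. -/
def LimSet {X : Type*} [TopologicalSpace X] (x : ℕ → X) (A : Set ℕ) : Set X :=
  {η | ∃ B ⊆ A, B.Infinite ∧ ConvAlong x B η}

/-- The ideal `I_W` attached to a sequence `x` and a set `W`. -/
def IdealW {X : Type*} [TopologicalSpace X] (x : ℕ → X) (W : Set X) : Set (Set ℕ) :=
  {A : Set ℕ | LimSet x A ∩ W = ∅}

/-- Rudin–Blass ordering on ideals. -/
def RudinBlassLE {Z W : Type*} (I : Set (Set Z)) (J : Set (Set W)) : Prop :=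
  ∃ φ : W → Z, (∀ z : Z, (φ ⁻¹' {z}).Finite) ∧ ∀ S : Set Z, S ∈ I ↔ φ ⁻¹' S ∈ J

/-- `Π⁰₃`-hardness of a subset of the Cantor space. -/
def Pi03Hard (B : Set (ℕ → Bool)) : Prop :=
  ∀ A ∈ PiClass (ℕ → Bool) 3, ∃ Φ : (ℕ → Bool) → (ℕ → Bool), Continuous Φ ∧ Φ ⁻¹' B = A


noncomputable instance : MetricSpace (ℕ → Bool) := TopologicalSpace.metrizableSpaceMetric _
noncomputable instance : MetricSpace (ℕ × ℕ → Bool) := TopologicalSpace.metrizableSpaceMetric _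

namespace S15


open Filter

variable {X : Type*} [TopologicalSpace X]

lemma convAlong_mono {x : ℕ → X} {A B : Set ℕ} {η : X} (hAB : A ⊆ B)
    (h : ConvAlong x B η) : ConvAlong x A η := fun U hU =>
  (h U hU).subset fun n hn => ⟨hAB hn.1, hn.2⟩

lemma convAlong_exists_index {x : ℕ → X} {B : Set ℕ} {η : X} (hB : B.Infinite)
    (h : ConvAlong x B η) {U : Set X} (hU : U ∈ nhds η) (m : ℕ) :
    ∃ n ∈ B, m ≤ n ∧ x n ∈ U := by
  by_contra hc
  push_neg at hc
  have : B ⊆ {n ∈ B | x n ∉ U} ∪ {n | n < m} := by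
    intro n hn
    by_cases hx : x n ∈ U
    · exact Or.inr (lt_of_not_ge fun hm => (hc n hn hm) hx)
    · exact Or.inl ⟨hn, hx⟩
  exact hB ((((h U hU).union (Set.finite_lt_nat m))).subset this)

lemma convAlong_unique [T2Space X] {x : ℕ → X} {B : Set ℕ} {η₁ η₂ : X} (hB : B.Infinite)
    (h1 : ConvAlong x B η₁) (h2 : ConvAlong x B η₂) : η₁ = η₂ := by
  by_contra hne
  obtain ⟨U, V, hU, hV, hη₁, hη₂, hUV⟩ := t2_separation hne
  have : B ⊆ {n ∈ B | x n ∉ U} ∪ {n ∈ B | x n ∉ V} := by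
    intro n hn
    by_cases hx : x n ∈ U
    · exact Or.inr ⟨hn, fun hv => (Set.disjoint_left.mp hUV hx) hv⟩
    · exact Or.inl ⟨hn, hx⟩
  exact hB (((h1 U (hU.mem_nhds hη₁)).union (h2 V (hV.mem_nhds hη₂))).subset this)

lemma convAlong_of_strictMono {z : ℕ → X} {u : ℕ → ℕ} {η : X} (hu : StrictMono u)
    (h : Tendsto (z ∘ u) atTop (𝓝 η)) : ConvAlong z (Set.range u) η := by
  intro U hU
  obtain ⟨T, hT⟩ := (tendsto_atTop'.mp h U hU)
  have : {n ∈ Set.range u | z n ∉ U} ⊆ u '' (Set.Iio T) := by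
    rintro n ⟨⟨t, rfl⟩, hz⟩
    refine ⟨t, ?_, rfl⟩
    by_contra hc
    exact hz (hT t (le_of_not_gt hc))
  exact ((Set.finite_Iio T).image u).subset this

lemma mem_closure_of_convAlong {z : ℕ → X} {B : Set ℕ} {η : X} (hB : B.Infinite)
    (h : ConvAlong z B η) : η ∈ closure (z '' B) := by
  rw [mem_closure_iff]
  intro U hU hη
  obtain ⟨n, hn, -, hxU⟩ := convAlong_exists_index hB h (hU.mem_nhds hη) 0
  exact ⟨z n, hxU, ⟨n, hn, rfl⟩⟩



open Filter

-- a nonempty open set contains a cylinder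
lemma exists_cylinder {ι : Type*} {s : Set (ι → Bool)} (hs : IsOpen s) {g : ι → Bool}
    (hg : g ∈ s) : ∃ I : Finset ι, ∀ h : ι → Bool, (∀ i ∈ I, h i = g i) → h ∈ s := by
  rw [isOpen_pi_iff] at hs
  obtain ⟨I, u, hu, hsub⟩ := hs g hg
  exact ⟨I, fun h hh => hsub fun a ha => by rw [hh a ha]; exact (hu a ha).2⟩

-- finite dependence implies continuity (into Bool)
lemma continuous_of_finDep {ι : Type*} [DecidableEq ι] (c : (ι → Bool) → Bool) (I : Finset ι)
    (h : ∀ f g : ι → Bool, (∀ i ∈ I, f i = g i) → c f = c g) : Continuous c := by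
  have : c = (fun v : {i // i ∈ I} → Bool =>
      c (fun j => if hj : j ∈ I then v ⟨j, hj⟩ else false)) ∘ (fun f (i : {i // i ∈ I}) => f i.1) := by
    funext f
    simp only [Function.comp_apply]
    exact (h _ f fun i hi => by simp [hi]).symm
  rw [this]
  have hd : DiscreteTopology ({i // i ∈ I} → Bool) := by infer_instance
  exact (continuous_of_discreteTopology).comp (continuous_pi fun i => continuous_apply _)

lemma continuous_pibool {ι κ : Type*} [DecidableEq ι] (Φ : (ι → Bool) → (κ → Bool))
    (h : ∀ k : κ, ∃ I : Finset ι, ∀ f g : ι → Bool, (∀ i ∈ I, f i = g i) → Φ f k = Φ g k) :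
    Continuous Φ := by
  refine continuous_pi fun k => ?_
  obtain ⟨I, hI⟩ := h k
  exact continuous_of_finDep (fun f => Φ f k) I hI

-- every Σ⁰₂ set of (ℕ → Bool)-like metric spaces: open → Σ⁰₂
lemma isOpen_mem_sigma2 {Y : Type*} [MetricSpace Y] {U : Set Y} (hU : IsOpen U) :
    U ∈ SigmaClass Y 2 := by
  refine ⟨fun n => {y | ((n : ENNReal))⁻¹ ≤ EMetric.infEdist y Uᶜ}, fun n => ?_, ?_⟩
  · show IsOpen _
    have : IsClosed {y | ((n : ENNReal))⁻¹ ≤ EMetric.infEdist y Uᶜ} :=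
      IsClosed.preimage (EMetric.continuous_infEdist) (isClosed_Ici)
    simpa using this.isOpen_compl
  · ext y
    simp only [mem_iUnion, mem_setOf_eq]
    constructor
    · intro hy
      have hpos : 0 < EMetric.infEdist y Uᶜ := by
        refine EMetric.infEdist_pos_iff_notMem_closure.mpr ?_
        rw [hU.isClosed_compl.closure_eq]
        simpa using hy
      obtain ⟨n, hn⟩ := ENNReal.exists_inv_nat_lt (ne_of_gt hpos)
      exact ⟨n, hn.le⟩
    · rintro ⟨n, hn⟩
      by_contra hy
      have : EMetric.infEdist y Uᶜ = 0 := EMetric.infEdist_zero_of_mem (by simpa using hy)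
      rw [this, le_zero_iff, ENNReal.inv_eq_zero] at hn
      exact ENNReal.natCast_ne_top n hn

lemma sigma2_preimage {Y Z : Type*} [TopologicalSpace Y] [TopologicalSpace Z]
    {s : Set Z} (hs : s ∈ SigmaClass Z 2) {Φ : Y → Z} (hΦ : Continuous Φ) :
    Φ ⁻¹' s ∈ SigmaClass Y 2 := by
  obtain ⟨v, hv, rfl⟩ := hs
  refine ⟨fun m => Φ ⁻¹' (v m), fun m => ?_, by simp [Set.preimage_iUnion]⟩
  exact (hv m).preimage hΦ


lemma mem_sigma1 {Y : Type*} [TopologicalSpace Y] {s : Set Y} :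
    s ∈ SigmaClass Y 1 ↔ IsOpen s := Iff.rfl


open Filter

section xfacts

variable {x : ℕ → (ℕ → Bool)} (hinj : Function.Injective x)
    (hrange : Set.range x = {f : ℕ → Bool | {k : ℕ | f k = true}.Finite})

include hinj hrange

lemma infinite_x_mem {U : Set (ℕ → Bool)} (hU : IsOpen U) {g : ℕ → Bool} (hg : g ∈ U) :
    {n : ℕ | x n ∈ U}.Infinite := by
  obtain ⟨I, hI⟩ := exists_cylinder hU hg
  set M := (I.sup id) + 1 with hM
  have hnotI : ∀ k : ℕ, k + M ∉ I := by
    intro k hk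
    have := Finset.le_sup (f := id) hk
    simp only [id] at this
    omega
  set G : ℕ → (ℕ → Bool) := fun k i => if i ∈ I then g i else decide (i = k + M) with hG
  have hGfin : ∀ k, G k ∈ Set.range x := by
    intro k
    rw [hrange]
    refine Set.Finite.subset ((I.finite_toSet).union (Set.finite_singleton (k + M))) ?_
    intro i hi
    simp only [hG, mem_setOf_eq] at hi
    by_cases hiI : i ∈ I
    · exact Or.inl hiI
    · simp only [hiI, if_false, decide_eq_true_eq] at hi
      exact Or.inr hi
  have hGU : ∀ k, G k ∈ U := by
    intro k
    exact hI _ (fun i hi => by simp [hG, hi])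
  have hGinj : Function.Injective G := by
    intro k k' hkk
    by_contra hne
    have h1 : G k (k + M) = true := by simp [hG, hnotI k]
    have h2 : G k' (k + M) = false := by
      simp only [hG, hnotI k, if_false]
      simp only [decide_eq_false_iff_not]
      omega
    rw [hkk] at h1
    rw [h1] at h2
    exact Bool.noConfusion h2
  choose n hn using fun k => hGfin k
  refine Set.infinite_of_injective_forall_mem (f := n) ?_ ?_
  · intro k k' h
    exact hGinj (by rw [← hn k, ← hn k', h])
  · intro k
    show x (n k) ∈ U
    rw [hn k]
    exact hGU k

lemma singleton_nwd (g : ℕ → Bool) : interior ({g} : Set (ℕ → Bool)) = ∅ := by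
  by_contra hne
  obtain ⟨h, hh⟩ := Set.nonempty_iff_ne_empty.mpr hne
  have hsub := interior_subset (s := ({g} : Set (ℕ → Bool)))
  have hinf := infinite_x_mem hinj hrange isOpen_interior hh
  have : {n | x n ∈ interior ({g} : Set (ℕ → Bool))} ⊆ x ⁻¹' {g} := fun n hn => hsub hn
  have hfin : (x ⁻¹' {g} : Set ℕ).Finite := (Set.finite_singleton g).preimage
    (Set.injOn_of_injective hinj)
  exact hinf (hfin.subset this)

lemma suppInfinite_not_sigma2 :
    {f : ℕ → Bool | {k : ℕ | f k = true}.Infinite} ∉ SigmaClass (ℕ → Bool) 2 := by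
  intro hE
  set E := {f : ℕ → Bool | {k : ℕ | f k = true}.Infinite} with hEdef
  have hEc : Eᶜ = Set.range x := by
    rw [hrange]
    ext f
    simp [hEdef, Set.not_infinite]
  obtain ⟨v, hv, hvE⟩ := hE
  -- each v m is closed and nowhere dense
  have hnwd : ∀ (t : Set (ℕ → Bool)), IsClosed t → interior t = ∅ → IsMeagre t := by
    intro t hcl hint
    rw [IsMeagre]
    apply residual_of_dense_open hcl.isOpen_compl
    rwa [← interior_eq_empty_iff_dense_compl]
  have hmeagE : IsMeagre E := by
    rw [hvE]
    refine isMeagre_iUnion fun m => ?_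
    have hcl : IsClosed (v m) := isOpen_compl_iff.mp (mem_sigma1.mp (hv m))
    have hsubE : v m ⊆ E := hvE ▸ Set.subset_iUnion v m
    refine hnwd _ hcl ?_
    by_contra hne
    obtain ⟨h, hh⟩ := Set.nonempty_iff_ne_empty.mpr hne
    obtain ⟨n, hn⟩ := (infinite_x_mem hinj hrange isOpen_interior hh).nonempty
    have h1 : x n ∈ E := hsubE (interior_subset hn)
    have h2 : x n ∈ Eᶜ := hEc ▸ Set.mem_range_self n
    exact h2 h1
  have hmeagEc : IsMeagre Eᶜ := by
    have h3 : Eᶜ = ⋃ k, {x k} := by rw [hEc]; exact Set.range_eq_iUnion x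
    rw [h3]
    exact isMeagre_iUnion fun k => hnwd _ isClosed_singleton (singleton_nwd hinj hrange _)
  have hmU : IsMeagre (E ∪ Eᶜ) := by
    rw [IsMeagre, Set.compl_union]
    exact Filter.inter_mem hmeagE hmeagEc
  rw [Set.union_compl_self, IsMeagre, Set.compl_univ] at hmU
  exact absurd (dense_of_mem_residual hmU).nonempty (by simp)

end xfacts



open Filter

/-- `t`-th clopen approximation of a set in Cantor space. -/
def NSet (F : Set (ℕ → Bool)) (t : ℕ) : Set (ℕ → Bool) :=
  {f | ∃ g ∈ F, ∀ j < t, g j = f j}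

lemma subset_NSet {F : Set (ℕ → Bool)} {t : ℕ} : F ⊆ NSet F t :=
  fun f hf => ⟨f, hf, fun _ _ => rfl⟩

lemma NSet_anti {F : Set (ℕ → Bool)} {t t' : ℕ} (h : t ≤ t') : NSet F t' ⊆ NSet F t := by
  rintro f ⟨g, hg, hgf⟩
  exact ⟨g, hg, fun j hj => hgf j (lt_of_lt_of_le hj h)⟩

lemma NSet_finDep {F : Set (ℕ → Bool)} {t : ℕ} {f g : ℕ → Bool}
    (h : ∀ j < t, f j = g j) : f ∈ NSet F t ↔ g ∈ NSet F t := by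
  constructor <;> rintro ⟨u, hu, huf⟩
  · exact ⟨u, hu, fun j hj => (huf j hj).trans (h j hj)⟩
  · exact ⟨u, hu, fun j hj => (huf j hj).trans (h j hj).symm⟩

lemma iInter_NSet {F : Set (ℕ → Bool)} (hF : IsClosed F) : ⋂ t, NSet F t = F := by
  refine Set.Subset.antisymm ?_ (Set.subset_iInter fun t => subset_NSet)
  intro f hf
  rw [← hF.closure_eq, mem_closure_iff]
  intro U hU hfU
  obtain ⟨I, hI⟩ := exists_cylinder hU hfU
  obtain ⟨g, hg, hgf⟩ := Set.mem_iInter.mp hf ((I.sup id) + 1)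
  refine ⟨g, hI g fun i hi => hgf i ?_, hg⟩
  have := Finset.le_sup (f := id) hi
  simp only [id] at this
  omega

open scoped Classical in
/-- The least `m ≤ i` such that `f` is in the `i`-th approximation of `F m`, else `i + 1`. -/
noncomputable def muF (F : ℕ → Set (ℕ → Bool)) (i : ℕ) (f : ℕ → Bool) : ℕ :=
  if h : ∃ m, m ≤ i ∧ f ∈ NSet (F m) i then Nat.find h else i + 1

section mu
variable {F : ℕ → Set (ℕ → Bool)} {f : ℕ → Bool}

lemma muF_le_succ (i : ℕ) : muF F i f ≤ i + 1 := by
  classical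
  rw [muF]
  split_ifs with h
  · obtain ⟨m, hm, _⟩ := Nat.find_spec h
    omega
  · exact le_rfl

lemma muF_le {i m : ℕ} (hm : m ≤ i) (hmem : f ∈ NSet (F m) i) : muF F i f ≤ m := by
  classical
  rw [muF, dif_pos ⟨m, hm, hmem⟩]
  exact Nat.find_le ⟨hm, hmem⟩

lemma muF_mem {i : ℕ} (h : muF F i f ≤ i) : f ∈ NSet (F (muF F i f)) i := by
  classical
  rw [muF] at h ⊢
  split_ifs at h ⊢ with hex
  · exact (Nat.find_spec hex).2
  · omega

lemma muF_gt {i M : ℕ} (h : ∀ m ≤ M, f ∉ NSet (F m) i) (hMi : M ≤ i) : M < muF F i f := by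
  classical
  by_contra hc
  push_neg at hc
  have h1 : muF F i f ≤ i := le_trans hc hMi
  exact h _ hc (muF_mem h1)

lemma muF_mono_succ (i : ℕ) : muF F i f ≤ muF F (i + 1) f := by
  classical
  by_cases h : ∃ m, m ≤ i + 1 ∧ f ∈ NSet (F m) (i + 1)
  · have hval : muF F (i+1) f = Nat.find h := by rw [muF, dif_pos h]
    obtain ⟨hle, hmem⟩ := Nat.find_spec h
    have hmem' : f ∈ NSet (F (Nat.find h)) i := NSet_anti (Nat.le_succ i) hmem
    rcases Nat.lt_or_ge (Nat.find h) (i+1) with hlt | hge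
    · rw [hval]; exact muF_le (by omega) hmem'
    · rw [hval]; exact le_trans (muF_le_succ i) (by omega)
  · have : muF F (i+1) f = i + 2 := by rw [muF, dif_neg h]
    rw [this]
    exact le_trans (muF_le_succ i) (by omega)

lemma muF_mono : Monotone (fun i => muF F i f) := by
  apply monotone_nat_of_le_succ
  exact fun i => muF_mono_succ i

lemma muF_finDep {i : ℕ} {g : ℕ → Bool} (h : ∀ j < i, f j = g j) : muF F i f = muF F i g := by
  classical
  have key : ∀ m, f ∈ NSet (F m) i ↔ g ∈ NSet (F m) i := fun m => NSet_finDep h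
  by_cases hex : ∃ m, m ≤ i ∧ f ∈ NSet (F m) i
  · have hex' : ∃ m, m ≤ i ∧ g ∈ NSet (F m) i := by
      obtain ⟨m, hm, hmem⟩ := hex
      exact ⟨m, hm, (key m).mp hmem⟩
    rw [muF, muF, dif_pos hex, dif_pos hex']
    refine le_antisymm (Nat.find_le ?_) (Nat.find_le ?_)
    · obtain ⟨h1, h2⟩ := Nat.find_spec hex'
      exact ⟨h1, (key _).mpr h2⟩
    · obtain ⟨h1, h2⟩ := Nat.find_spec hex
      exact ⟨h1, (key _).mp h2⟩
  · have hex' : ¬∃ m, m ≤ i ∧ g ∈ NSet (F m) i := by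
      intro ⟨m, hm, hmem⟩
      exact hex ⟨m, hm, (key m).mpr hmem⟩
    rw [muF, muF, dif_neg hex, dif_neg hex']

lemma muF_bounded (hmem : ∃ m₀, f ∈ F m₀) : ∃ C, ∀ i, muF F i f ≤ C := by
  obtain ⟨m₀, hm₀⟩ := hmem
  refine ⟨m₀ + 1, fun i => ?_⟩
  rcases Nat.lt_or_ge i m₀ with h | h
  · exact le_trans (muF_le_succ i) (by omega)
  · exact le_trans (muF_le h (subset_NSet hm₀)) (by omega)

lemma muF_unbounded (hcl : ∀ m, IsClosed (F m)) (hmem : ∀ m, f ∉ F m) (M : ℕ) :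
    ∃ T, ∀ i, T ≤ i → M < muF F i f := by
  have key : ∀ m, ∃ t, ∀ i, t ≤ i → f ∉ NSet (F m) i := by
    intro m
    have : f ∉ ⋂ t, NSet (F m) t := by rw [iInter_NSet (hcl m)]; exact hmem m
    rw [Set.mem_iInter] at this
    push_neg at this
    obtain ⟨t, ht⟩ := this
    exact ⟨t, fun i hi hmem' => ht (NSet_anti hi hmem')⟩
  choose t ht using key
  refine ⟨max M ((Finset.range (M+1)).sup t), fun i hi => ?_⟩
  refine muF_gt (fun m hm hmem' => ?_) (le_trans (le_max_left _ _) hi)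
  refine ht m i ?_ hmem'
  exact le_trans (le_trans (Finset.le_sup (Finset.mem_range.mpr (by omega))) (le_max_right _ _)) hi

lemma changes_finite (hbd : ∃ C, ∀ i, muF F i f ≤ C) :
    {i | muF F i f ≠ muF F (i + 1) f}.Finite := by
  obtain ⟨C, hC⟩ := hbd
  set Z := {i | muF F i f ≠ muF F (i + 1) f} with hZ
  have key : ∀ i ∈ Z, ∀ j ∈ Z, i < j → muF F i f < muF F j f := by
    intro i hi j hj hij
    calc muF F i f < muF F (i+1) f := lt_of_le_of_ne (muF_mono_succ i) hi
    _ ≤ muF F j f := muF_mono (by omega)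
  refine Set.Finite.of_finite_image (f := fun i => muF F i f) ((Set.finite_Iic C).subset ?_) ?_
  · rintro m ⟨i, hi, rfl⟩
    exact hC i
  · intro i hi j hj hij
    rcases Nat.lt_trichotomy i j with h | h | h
    · exact absurd hij (ne_of_lt (key i hi j hj h))
    · exact h
    · exact absurd hij.symm (ne_of_lt (key j hj i hi h))

lemma changes_infinite' (hcl : ∀ m, IsClosed (F m)) (hmem : ∀ m, f ∉ F m) :
    {i | muF F i f ≠ muF F (i + 1) f}.Infinite := by
  intro hfin
  obtain ⟨N, hN⟩ : ∃ N, ∀ i ∈ {i | muF F i f ≠ muF F (i + 1) f}, i < N := by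
    rcases hfin.bddAbove with ⟨b, hb⟩
    exact ⟨b + 1, fun i hi => by have := hb hi; omega⟩
  have hconst : ∀ i, N ≤ i → muF F i f = muF F N f := by
    intro i hi
    induction i with
    | zero => rw [Nat.le_zero.mp hi]
    | succ i ih =>
      rcases Nat.lt_or_ge i N with h | h
      · have hN1 : N = i + 1 := by omega
        rw [hN1]
      · have h2 : muF F i f = muF F (i + 1) f := by
          by_contra hne
          exact absurd (hN i hne) (by omega)
        rw [← h2]
        exact ih h
  obtain ⟨T, hT⟩ := muF_unbounded hcl hmem (muF F N f)
  have h1 := hT (max N T) (le_max_right _ _)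
  rw [hconst (max N T) (le_max_left _ _)] at h1
  omega

end mu

lemma sigma2_reduction {G : Set (ℕ → Bool)} (hG : G ∈ SigmaClass (ℕ → Bool) 2) :
    ∃ Φ : (ℕ → Bool) → ℕ → Bool,
      (∀ i, ∀ f g : ℕ → Bool, (∀ j < i + 2, f j = g j) → Φ f i = Φ g i) ∧
      ∀ f, ({i | Φ f i = true}.Finite ↔ f ∈ G) := by
  obtain ⟨v, hv, rfl⟩ := hG
  set F : ℕ → Set (ℕ → Bool) := fun m => ⋃ m' ∈ Finset.range (m + 1), v m' with hF
  have hFcl : ∀ m, IsClosed (F m) := by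
    intro m
    refine isClosed_biUnion_finset fun m' _ => ?_
    exact isOpen_compl_iff.mp (mem_sigma1.mp (hv m'))
  have hFsub : ∀ m, F m ⊆ ⋃ k, v k := by
    intro m g hg
    simp only [hF, Set.mem_iUnion] at hg ⊢
    obtain ⟨m', _, hm'⟩ := hg
    exact ⟨m', hm'⟩
  have hFmem : ∀ g, g ∈ (⋃ k, v k) → ∃ m₀, g ∈ F m₀ := by
    intro g hg
    rw [Set.mem_iUnion] at hg
    obtain ⟨k, hk⟩ := hg
    exact ⟨k, by simp only [hF, Set.mem_iUnion]; exact ⟨k, Finset.mem_range.mpr (by omega), hk⟩⟩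
  refine ⟨fun f i => decide (muF F i f ≠ muF F (i + 1) f), ?_, ?_⟩
  · intro i f g hagree
    have h1 : muF F i f = muF F i g := muF_finDep (fun j hj => hagree j (by omega))
    have h2 : muF F (i+1) f = muF F (i+1) g := muF_finDep (fun j hj => hagree j (by omega))
    simp only [h1, h2]
  · intro f
    have hset : {i | (decide (muF F i f ≠ muF F (i + 1) f) : Bool) = true}
        = {i | muF F i f ≠ muF F (i + 1) f} := by
      ext i; simp
    rw [hset]
    constructor
    · intro hfin
      by_contra hg
      exact changes_infinite' hFcl (fun m hm => hg (hFsub m hm)) hfin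
    · intro hg
      exact changes_finite (muF_bounded (hFmem f hg))


section struct

variable {x : ℕ → (ℕ → Bool)} {W : Set (ℕ → Bool)}

/-- Structure extracted from a non-closed `W`. -/
lemma exists_struct (hinj : Function.Injective x)
    (hrange : Set.range x = {f : ℕ → Bool | {k : ℕ | f k = true}.Finite})
    (hW : ¬IsClosed W) :
    ∃ (η : ℕ → Bool) (w : ℕ → (ℕ → Bool)) (e : ℕ → ℕ → ℕ),
      η ∉ W ∧ (∀ j, w j ∈ W) ∧ (∀ j, StrictMono (e j)) ∧
      (∀ j j' i i', e j i = e j' i' → j = j' ∧ i = i') ∧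
      (∀ j, ConvAlong x (Set.range (e j)) (w j)) ∧
      (∀ B : Set ℕ, B ⊆ (⋃ j, Set.range (e j)) → (∀ j, (B ∩ Set.range (e j)).Finite) →
        ConvAlong x B η) := by
  -- a point in the closure of W but not in W
  obtain ⟨η, hηc, hηW⟩ : ∃ η, η ∈ closure W ∧ η ∉ W := by
    by_contra hc
    push_neg at hc
    exact hW (isClosed_of_closure_subset fun u hu => hc u hu)
  -- the fast-converging sequence w in W
  have step : ∀ r : ℝ, 0 < r → ∃ u, u ∈ W ∧ dist u η < r := by
    intro r hr
    obtain ⟨u, hu, hd⟩ := Metric.mem_closure_iff.mp hηc r hr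
    exact ⟨u, hu, by rwa [dist_comm]⟩
  choose pick hpickW hpickd using step
  let T := {u : ℕ → Bool // u ∈ W ∧ 0 < dist u η}
  let mkT : ∀ (r : ℝ), 0 < r → T := fun r hr =>
    ⟨pick r hr, hpickW r hr, dist_pos.mpr (fun he => hηW (he ▸ hpickW r hr))⟩
  let w' : ℕ → T := fun n => Nat.rec (mkT 1 one_pos)
    (fun _ p => mkT (dist p.1 η / 4) (by have := p.2.2; linarith)) n
  set w : ℕ → (ℕ → Bool) := fun n => (w' n).1 with hw
  set d : ℕ → ℝ := fun n => dist (w n) η with hd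
  have hdpos : ∀ n, 0 < d n := fun n => (w' n).2.2
  have hwW : ∀ n, w n ∈ W := fun n => (w' n).2.1
  have hdstep : ∀ n, d (n + 1) < d n / 4 := by
    intro n
    exact hpickd (dist (w' n).1 η / 4) _
  have hdmono0 : ∀ j k, d (j + k) ≤ d j := by
    intro j k
    induction k with
    | zero => simp
    | succ k ih =>
      have h1 : d (j + k + 1) < d (j + k) / 4 := hdstep (j + k)
      have h2 := hdpos (j + k)
      have h3 : j + (k + 1) = j + k + 1 := by omega
      rw [h3]
      linarith
  have hdmono : ∀ {j j' : ℕ}, j ≤ j' → d j' ≤ d j := by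
    intro j j' h
    obtain ⟨k, rfl⟩ := Nat.exists_eq_add_of_le h
    exact hdmono0 j k
  have hdquarter : ∀ {j j' : ℕ}, j < j' → d j' ≤ d j / 4 := by
    intro j j' h
    have h1 : d j' ≤ d (j + 1) := hdmono (j := j + 1) (j' := j') (by omega)
    have h2 := hdstep j
    linarith
  have hdgeom : ∀ n, d n ≤ d 0 / 2 ^ n := by
    intro n
    induction n with
    | zero => simp
    | succ n ih =>
      have h1 := hdstep n
      have h2 := hdpos n
      have hp : (0:ℝ) < d 0 / 2 ^ n := lt_of_lt_of_le (hdpos n) ih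
      calc d (n + 1) ≤ d n / 4 := le_of_lt h1
        _ ≤ (d 0 / 2 ^ n) / 4 := by linarith
        _ ≤ (d 0 / 2 ^ n) / 2 := by linarith
        _ = d 0 / (2 ^ n * 2) := by rw [div_div]
        _ = d 0 / 2 ^ (n + 1) := by rw [pow_succ]
  -- the sets A_j via strictly monotone enumerations e j
  set δ : ℕ → ℝ := fun j => d j / 4 with hδ
  have hδpos : ∀ j, 0 < δ j := fun j => by have := hdpos j; simp only [hδ]; linarith
  have hSinf : ∀ (j : ℕ) (r : ℝ), 0 < r → {n | dist (x n) (w j) < r}.Infinite := by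
    intro j r hr
    have : {n | dist (x n) (w j) < r} = {n | x n ∈ Metric.ball (w j) r} := rfl
    rw [this]
    exact infinite_x_mem hinj hrange Metric.isOpen_ball (Metric.mem_ball_self hr)
  have hnext : ∀ (j i prev : ℕ), ∃ n, prev < n ∧ dist (x n) (w j) < min (δ j) ((1/2:ℝ)^i) := by
    intro j i prev
    have hr : (0:ℝ) < min (δ j) ((1/2:ℝ)^i) := lt_min (hδpos j) (by positivity)
    obtain ⟨n, hn, hgt⟩ := (hSinf j _ hr).exists_gt prev
    exact ⟨n, hgt, hn⟩
  choose nxt hnxt1 hnxt2 using hnext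
  set e : ℕ → ℕ → ℕ := fun j i => Nat.rec (nxt j 0 0) (fun i' p => nxt j (i' + 1) p) i with he
  have he0 : ∀ j, e j 0 = nxt j 0 0 := fun j => rfl
  have heS : ∀ j i, e j (i + 1) = nxt j (i + 1) (e j i) := fun j i => rfl
  have hedist : ∀ j i, dist (x (e j i)) (w j) < min (δ j) ((1/2:ℝ)^i) := by
    intro j i
    cases i with
    | zero => exact hnxt2 j 0 0
    | succ i' => exact hnxt2 j (i' + 1) (e j i')
  have hemono : ∀ j, StrictMono (e j) := by
    intro j
    apply strictMono_nat_of_lt_succ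
    intro i
    rw [heS]
    exact hnxt1 j (i + 1) (e j i)
  have hedistδ : ∀ j i, dist (x (e j i)) (w j) < δ j :=
    fun j i => lt_of_lt_of_le (hedist j i) (min_le_left _ _)
  -- disjointness
  have hdisj : ∀ j j' i i', e j i = e j' i' → j = j' := by
    have key : ∀ j j' i i', j < j' → e j i ≠ e j' i' := by
      intro j j' i i' hjj heq
      have h1 := hedistδ j i
      have h2 := hedistδ j' i'
      rw [heq] at h1
      have h3 : dist (w j) (w j') < δ j + δ j' := by
        calc dist (w j) (w j') ≤ dist (w j) (x (e j' i')) + dist (x (e j' i')) (w j') :=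
          dist_triangle _ _ _
        _ < δ j + δ j' := by rw [dist_comm (w j)]; exact add_lt_add h1 h2
      have h4 : d j - d j' ≤ dist (w j) (w j') := by
        have := abs_dist_sub_le (w j) (w j') η
        rw [abs_sub_le_iff] at this
        exact le_trans (by linarith [this.1]) (le_refl _)
      have h5 : d j' ≤ d j / 4 := hdquarter hjj
      have h6 : 0 < d j := hdpos j
      simp only [hδ] at h3
      linarith
    intro j j' i i' heq
    rcases Nat.lt_trichotomy j j' with h | h | h
    · exact absurd heq (key j j' i i' h)
    · exact h
    · exact absurd heq.symm (key j' j i' i h)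
  have hdisj2 : ∀ j j' i i', e j i = e j' i' → j = j' ∧ i = i' := by
    intro j j' i i' heq
    obtain rfl := hdisj j j' i i' heq
    exact ⟨rfl, (hemono j).injective heq⟩
  -- convergence along each column
  have hconv : ∀ j, ConvAlong x (Set.range (e j)) (w j) := by
    intro j
    apply convAlong_of_strictMono (hemono j)
    rw [tendsto_iff_dist_tendsto_zero]
    apply squeeze_zero (fun i => dist_nonneg)
      (fun i => le_of_lt (lt_of_lt_of_le (hedist j i) (min_le_right _ _)))
    exact tendsto_pow_atTop_nhds_zero_of_lt_one (by norm_num) (by norm_num)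
  -- the diagonal property
  refine ⟨η, w, e, hηW, hwW, hemono, hdisj2, hconv, ?_⟩
  intro B hBsub hBfin U hU
  obtain ⟨ε, hε, hball⟩ := Metric.mem_nhds_iff.mp hU
  -- choose J with 2 * d 0 / 2 ^ J < ε
  obtain ⟨J, hJ⟩ : ∃ J : ℕ, 2 * d 0 / 2 ^ J < ε := by
    obtain ⟨J, hJ⟩ := pow_unbounded_of_one_lt (2 * d 0 / ε) (by norm_num : (1:ℝ) < 2)
    refine ⟨J, ?_⟩
    rw [div_lt_iff₀ (by positivity)]
    rw [div_lt_iff₀ hε] at hJ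
    linarith
  have hkey : ∀ j, J ≤ j → ∀ i, e j i ∈ B → x (e j i) ∈ U := by
    intro j hj i _
    apply hball
    rw [Metric.mem_ball]
    have h1 : dist (x (e j i)) η ≤ dist (x (e j i)) (w j) + d j := dist_triangle _ _ _
    have h2 := hedistδ j i
    have h3 := hdgeom j
    have h4 : d 0 / 2 ^ j ≤ d 0 / 2 ^ J := by
      have h0 := (hdpos 0).le
      gcongr
      all_goals first | norm_num | omega
    have h5 := hdpos j
    simp only [hδ] at h2
    calc dist (x (e j i)) η ≤ dist (x (e j i)) (w j) + d j := h1
      _ < d j / 4 + d j := by linarith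
      _ ≤ 2 * d j := by linarith
      _ ≤ 2 * (d 0 / 2 ^ j) := by linarith
      _ ≤ 2 * (d 0 / 2 ^ J) := by linarith
      _ < ε := by rw [mul_div_assoc] at hJ; exact hJ
  have hsub2 : {n ∈ B | x n ∉ U} ⊆ ⋃ j ∈ Finset.range J, (B ∩ Set.range (e j)) := by
    rintro n ⟨hnB, hnU⟩
    obtain ⟨j, i, rfl⟩ : ∃ j i, e j i = n := by
      obtain ⟨j, hj⟩ := Set.mem_iUnion.mp (hBsub hnB)
      obtain ⟨i, hi⟩ := hj
      exact ⟨j, i, hi⟩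
    rcases Nat.lt_or_ge j J with h | h
    · exact Set.mem_biUnion (Finset.mem_range.mpr h) ⟨hnB, Set.mem_range_self i⟩
    · exact absurd (hkey j h i hnB) hnU
  exact Set.Finite.subset (Set.Finite.biUnion (Finset.range J).finite_toSet
    (fun j _ => hBfin j)) hsub2

end struct

section ideal

variable {x : ℕ → (ℕ → Bool)} {W : Set (ℕ → Bool)}

lemma mem_IdealW {A : Set ℕ} : A ∈ IdealW x W ↔ LimSet x A ∩ W = ∅ := Iff.rfl

lemma not_mem_IdealW_of_witness {A : Set ℕ} {B : Set ℕ} {u : ℕ → Bool} (hBA : B ⊆ A)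
    (hBinf : B.Infinite) (hconv : ConvAlong x B u) (hu : u ∈ W) : A ∉ IdealW x W := by
  intro hA
  rw [mem_IdealW, Set.eq_empty_iff_forall_notMem] at hA
  exact hA u ⟨⟨B, hBA, hBinf, hconv⟩, hu⟩

lemma fubini_mem {S : Set (ℕ × ℕ)} :
    S ∈ FubiniProd ({∅} : Set (Set ℕ)) (FinIdeal ℕ) ↔ ∀ n, {k | (n, k) ∈ S}.Finite := by
  simp only [FubiniProd, FinIdeal, Set.mem_setOf_eq, Set.mem_singleton_iff,
    Set.eq_empty_iff_forall_notMem, not_not]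

lemma rb_of_notClosed (hinj : Function.Injective x)
    (hrange : Set.range x = {f : ℕ → Bool | {k : ℕ | f k = true}.Finite})
    (hW : ¬IsClosed W) :
    RudinBlassLE (FubiniProd ({∅} : Set (Set ℕ)) (FinIdeal ℕ)) (IdealW x W) := by
  classical
  obtain ⟨η, w, e, hηW, hwW, hemono, hdisj, hconv, hdiag⟩ := exists_struct hinj hrange hW
  set φ : ℕ → ℕ × ℕ :=
    fun n => if h : ∃ p : ℕ × ℕ, e p.1 p.2 = n then h.choose else (0, n) with hφ
  have hφe : ∀ j i, φ (e j i) = (j, i) := by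
    intro j i
    have hex : ∃ p : ℕ × ℕ, e p.1 p.2 = e j i := ⟨(j, i), rfl⟩
    rw [hφ]
    simp only [dif_pos hex]
    obtain ⟨h1, h2⟩ := hdisj _ _ _ _ hex.choose_spec
    exact Prod.ext h1 h2
  have hφout : ∀ n, (∀ j i, e j i ≠ n) → φ n = (0, n) := by
    intro n hn
    rw [hφ]
    have : ¬∃ p : ℕ × ℕ, e p.1 p.2 = n := by
      rintro ⟨p, hp⟩
      exact hn p.1 p.2 hp
    simp only [dif_neg this]
  refine ⟨φ, ?_, ?_⟩
  · -- finite-to-one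
    intro z
    refine Set.Finite.subset ((Set.finite_singleton z.2).insert (e z.1 z.2)) ?_
    intro n hn
    simp only [Set.mem_preimage, Set.mem_singleton_iff] at hn
    by_cases hex : ∃ j i, e j i = n
    · obtain ⟨j, i, rfl⟩ := hex
      rw [hφe] at hn
      rw [← hn]
      exact Set.mem_insert _ _
    · push_neg at hex
      rw [hφout n hex] at hn
      right
      simp [← hn]
  · intro S
    constructor
    · -- S ∈ ∅×Fin → φ⁻¹ S ∈ I_W
      intro hS
      rw [fubini_mem] at hS
      rw [mem_IdealW, Set.eq_empty_iff_forall_notMem]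
      rintro η' ⟨⟨B, hB, hBinf, hBconv⟩, hη'W⟩
      set B₁ := B ∩ (⋃ j, Set.range (e j)) with hB₁
      have hout : (B \ (⋃ j, Set.range (e j))).Finite := by
        refine Set.Finite.subset (hS 0) ?_
        rintro n ⟨hnB, hnout⟩
        have hnoe : ∀ j i, e j i ≠ n := by
          intro j i he
          exact hnout (Set.mem_iUnion.mpr ⟨j, i, he⟩)
        have := hB hnB
        rw [Set.mem_preimage, hφout n hnoe] at this
        exact this
      have hB₁inf : B₁.Infinite := by
        have : B ⊆ B₁ ∪ (B \ (⋃ j, Set.range (e j))) := by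
          intro n hn
          by_cases h : n ∈ ⋃ j, Set.range (e j)
          · exact Or.inl ⟨hn, h⟩
          · exact Or.inr ⟨hn, h⟩
        intro hfin
        exact hBinf ((hfin.union hout).subset this)
      have hB₁fin : ∀ j, (B₁ ∩ Set.range (e j)).Finite := by
        intro j
        refine Set.Finite.subset ((hS j).image (e j)) ?_
        rintro n ⟨⟨hnB, -⟩, i, rfl⟩
        have := hB hnB
        rw [Set.mem_preimage, hφe] at this
        exact ⟨i, this, rfl⟩
      have hconvη : ConvAlong x B₁ η := hdiag B₁ Set.inter_subset_right hB₁fin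
      have hconvη' : ConvAlong x B₁ η' := convAlong_mono Set.inter_subset_left hBconv
      have : η' = η := convAlong_unique hB₁inf hconvη' hconvη
      rw [this] at hη'W
      exact hηW hη'W
    · -- contrapositive
      intro hpre
      by_contra hS
      rw [fubini_mem] at hS
      push_neg at hS
      obtain ⟨j, hj⟩ := hS
      refine not_mem_IdealW_of_witness (B := e j '' {i | (j, i) ∈ S}) ?_ ?_ ?_ (hwW j) hpre
      · rintro n ⟨i, hi, rfl⟩
        rw [Set.mem_preimage, hφe]
        exact hi
      · exact (Set.Infinite.image (Set.injOn_of_injective (hemono j).injective)) hj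
      · refine convAlong_mono ?_ (hconv j)
        rintro n ⟨i, -, rfl⟩
        exact Set.mem_range_self i

end ideal

section hard

variable {x : ℕ → (ℕ → Bool)} {W : Set (ℕ → Bool)}

lemma pi03hard_of_rb (hrb : RudinBlassLE (FubiniProd ({∅} : Set (Set ℕ)) (FinIdeal ℕ))
    (IdealW x W)) : Pi03Hard (chiSet (IdealW x W)) := by
  obtain ⟨φ, hfto, hiff⟩ := hrb
  intro A hA
  obtain ⟨u, hu, hAc⟩ := hA
  choose Φk hΦdep hΦiff using fun k => sigma2_reduction (hu k)
  refine ⟨fun f n => Φk (φ n).1 f (φ n).2, ?_, ?_⟩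
  · apply continuous_pibool
    intro n
    exact ⟨Finset.range ((φ n).2 + 2), fun f g hfg =>
      hΦdep (φ n).1 (φ n).2 f g (fun j hj => hfg j (Finset.mem_range.mpr hj))⟩
  · ext f
    simp only [Set.mem_preimage, chiSet, Set.mem_setOf_eq]
    have h1 : {n | Φk (φ n).1 f (φ n).2 = true} = φ ⁻¹' {p : ℕ × ℕ | Φk p.1 f p.2 = true} := rfl
    rw [h1, ← hiff, fubini_mem]
    have h2 : ∀ k, {i | (k, i) ∈ {p : ℕ × ℕ | Φk p.1 f p.2 = true}} = {i | Φk k f i = true} := by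
      intro k; rfl
    constructor
    · intro hall
      by_contra hfA
      have hfc : f ∈ Aᶜ := hfA
      rw [hAc, Set.mem_iUnion] at hfc
      obtain ⟨k, hk⟩ := hfc
      have h3 := hall k
      rw [h2 k] at h3
      exact (hΦiff k f).mp h3 hk
    · intro hfA k
      rw [h2 k]
      refine (hΦiff k f).mpr ?_
      intro hfu
      have : f ∈ Aᶜ := by rw [hAc, Set.mem_iUnion]; exact ⟨k, hfu⟩
      exact this hfA

lemma idealW_char_of_closed (hWne : W.Nonempty) (hWc : IsClosed W) {A : Set ℕ} :
    A ∈ IdealW x W ↔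
      ∃ k m : ℕ, ∀ n ∈ A, m ≤ n → 1 / ((k : ℝ) + 1) ≤ Metric.infDist (x n) W := by
  constructor
  · intro hA
    by_contra hc
    push_neg at hc
    -- build a strictly monotone sequence in A with infDist → 0
    have hstep : ∀ (t prev : ℕ), ∃ n, n ∈ A ∧ prev < n ∧
        Metric.infDist (x n) W < 1 / ((t : ℝ) + 1) := by
      intro t prev
      obtain ⟨n, hnA, hn1, hn2⟩ := hc t (prev + 1)
      exact ⟨n, hnA, by omega, hn2⟩
    choose nx hnx1 hnx2 hnx3 using hstep
    set nseq : ℕ → ℕ := fun t => Nat.rec (nx 0 0) (fun t' p => nx (t' + 1) p) t with hnseq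
    have hmem : ∀ t, nseq t ∈ A := by
      intro t
      cases t with
      | zero => exact hnx1 0 0
      | succ t' => exact hnx1 (t' + 1) (nseq t')
    have hlt : ∀ t, Metric.infDist (x (nseq t)) W < 1 / ((t : ℝ) + 1) := by
      intro t
      cases t with
      | zero => exact hnx3 0 0
      | succ t' => exact hnx3 (t' + 1) (nseq t')
    have hmono : StrictMono nseq := by
      apply strictMono_nat_of_lt_succ
      intro t
      exact hnx2 (t + 1) (nseq t)
    have hpick : ∀ t, ∃ u ∈ W, dist (x (nseq t)) u < 1 / ((t : ℝ) + 1) := by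
      intro t
      exact (Metric.infDist_lt_iff hWne).mp (hlt t)
    choose us hus1 hus2 using hpick
    obtain ⟨a, haW, ψ, hψ, hψconv⟩ := (hWc.isCompact).tendsto_subseq hus1
    have hconv : Filter.Tendsto (fun s => x (nseq (ψ s))) Filter.atTop (𝓝 a) := by
      rw [tendsto_iff_dist_tendsto_zero]
      apply squeeze_zero (fun s => dist_nonneg)
        (g := fun s => 1 / ((ψ s : ℝ) + 1) + dist (us (ψ s)) a)
      · intro s
        calc dist (x (nseq (ψ s))) a ≤ dist (x (nseq (ψ s))) (us (ψ s)) + dist (us (ψ s)) a :=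
            dist_triangle _ _ _
          _ ≤ 1 / ((ψ s : ℝ) + 1) + dist (us (ψ s)) a := by
            have := hus2 (ψ s); linarith
      · have ha : Filter.Tendsto (fun s => 1 / ((ψ s : ℝ) + 1)) Filter.atTop (𝓝 0) := by
          apply Filter.Tendsto.comp tendsto_one_div_add_atTop_nhds_zero_nat
          exact hψ.tendsto_atTop
        have hb : Filter.Tendsto (fun s => dist (us (ψ s)) a) Filter.atTop (𝓝 0) :=
          tendsto_iff_dist_tendsto_zero.mp hψconv
        simpa using ha.add hb
    refine not_mem_IdealW_of_witness (B := Set.range (fun s => nseq (ψ s))) ?_ ?_ ?_ haW hA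
    · rintro n ⟨s, rfl⟩
      exact hmem (ψ s)
    · exact Set.infinite_range_of_injective (hmono.comp hψ).injective
    · exact convAlong_of_strictMono (hmono.comp hψ) hconv
  · rintro ⟨k, m, hkm⟩
    rw [mem_IdealW, Set.eq_empty_iff_forall_notMem]
    rintro η' ⟨⟨B, hBA, hBinf, hBconv⟩, hη'W⟩
    have hball : Metric.ball η' (1 / ((k : ℝ) + 1)) ∈ nhds η' :=
      Metric.ball_mem_nhds _ (by positivity)
    obtain ⟨n, hnB, hnm, hnU⟩ := convAlong_exists_index hBinf hBconv hball m
    have h1 : Metric.infDist (x n) W ≤ dist (x n) η' := Metric.infDist_le_dist_of_mem hη'W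
    rw [Metric.mem_ball] at hnU
    have h2 := hkm n (hBA hnB) hnm
    linarith

lemma chi_sigma2_of_closed (hWne : W.Nonempty) (hWc : IsClosed W) :
    chiSet (IdealW x W) ∈ SigmaClass (ℕ → Bool) 2 := by
  classical
  set C : ℕ → ℕ → Set (ℕ → Bool) := fun k m =>
    {f | ∀ n, f n = true → m ≤ n → 1 / ((k : ℝ) + 1) ≤ Metric.infDist (x n) W} with hC
  refine ⟨fun t => C (Nat.unpair t).1 (Nat.unpair t).2, ?_, ?_⟩
  · intro t
    suffices hclosed : IsClosed (C (Nat.unpair t).1 (Nat.unpair t).2) by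
      exact mem_sigma1.mpr hclosed.isOpen_compl
    have : C (Nat.unpair t).1 (Nat.unpair t).2 = ⋂ n, {f : ℕ → Bool |
        f n = true → (Nat.unpair t).2 ≤ n →
          1 / (((Nat.unpair t).1 : ℝ) + 1) ≤ Metric.infDist (x n) W} := by
      ext f
      simp only [hC, Set.mem_setOf_eq, Set.mem_iInter]
    rw [this]
    refine isClosed_iInter fun n => ?_
    by_cases hcond : (Nat.unpair t).2 ≤ n → 1 / (((Nat.unpair t).1 : ℝ) + 1) ≤
        Metric.infDist (x n) W
    · have : {f : ℕ → Bool | f n = true → (Nat.unpair t).2 ≤ n →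
          1 / (((Nat.unpair t).1 : ℝ) + 1) ≤ Metric.infDist (x n) W} = Set.univ := by
        ext f; simp only [Set.mem_setOf_eq, Set.mem_univ, iff_true]; intro _; exact hcond
      rw [this]; exact isClosed_univ
    · have : {f : ℕ → Bool | f n = true → (Nat.unpair t).2 ≤ n →
          1 / (((Nat.unpair t).1 : ℝ) + 1) ≤ Metric.infDist (x n) W} = {f | f n = false} := by
        ext f
        simp only [Set.mem_setOf_eq]
        constructor
        · intro h
          cases hfn : f n with
          | false => rfl
          | true => exact absurd (h hfn) hcond
        · intro h hfn
          rw [h] at hfn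
          exact absurd hfn (by simp)
      rw [this]
      exact IsClosed.preimage (continuous_apply (A := fun _ : ℕ => Bool) n)
        (isClosed_singleton (x := false))
  · ext f
    simp only [chiSet, Set.mem_setOf_eq, Set.mem_iUnion]
    rw [idealW_char_of_closed hWne hWc]
    constructor
    · rintro ⟨k, m, hkm⟩
      exact ⟨Nat.pair k m, by rw [Nat.unpair_pair]; exact fun n hfn hmn => hkm n hfn hmn⟩
    · rintro ⟨t, ht⟩
      exact ⟨(Nat.unpair t).1, (Nat.unpair t).2, fun n hfn hmn => ht n hfn hmn⟩

lemma notClosed_of_pi03Hard (hinj : Function.Injective x)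
    (hrange : Set.range x = {f : ℕ → Bool | {k : ℕ | f k = true}.Finite})
    (hWne : W.Nonempty) (hhard : Pi03Hard (chiSet (IdealW x W))) : ¬IsClosed W := by
  intro hWc
  have hs2 := chi_sigma2_of_closed (x := x) hWne hWc
  have hE3 : {f : ℕ → Bool | {k : ℕ | f k = true}.Infinite} ∈ PiClass (ℕ → Bool) 3 := by
    show _ ∈ SigmaClass (ℕ → Bool) 3
    refine ⟨fun k => {x k}, fun k => isOpen_mem_sigma2 isClosed_singleton.isOpen_compl, ?_⟩
    rw [← Set.range_eq_iUnion]
    rw [hrange]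
    ext f
    simp [Set.not_infinite]
  obtain ⟨Φ, hΦc, hΦeq⟩ := hhard _ hE3
  have := sigma2_preimage hs2 hΦc
  rw [hΦeq] at this
  exact suppInfinite_not_sigma2 hinj hrange this

lemma notClosed_of_rb (hinj : Function.Injective x)
    (hrange : Set.range x = {f : ℕ → Bool | {k : ℕ | f k = true}.Finite})
    (hWne : W.Nonempty)
    (hrb : RudinBlassLE (FubiniProd ({∅} : Set (Set ℕ)) (FinIdeal ℕ)) (IdealW x W)) :
    ¬IsClosed W := by
  intro hWc
  have hs2 := chi_sigma2_of_closed (x := x) hWne hWc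
  obtain ⟨φ, hfto, hiff⟩ := hrb
  have hcont : Continuous (fun g : ℕ × ℕ → Bool => g ∘ φ) :=
    continuous_pi fun n => continuous_apply (φ n)
  have hchi : chiSet (FubiniProd ({∅} : Set (Set ℕ)) (FinIdeal ℕ)) =
      (fun g : ℕ × ℕ → Bool => g ∘ φ) ⁻¹' chiSet (IdealW x W) := by
    ext g
    simp only [chiSet, Set.mem_setOf_eq, Set.mem_preimage, Function.comp_apply]
    rw [hiff]
    rfl
  have h2 : chiSet (FubiniProd ({∅} : Set (Set ℕ)) (FinIdeal ℕ))
      ∈ SigmaClass (ℕ × ℕ → Bool) 2 := by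
    rw [hchi]
    exact sigma2_preimage hs2 hcont
  classical
  set Ψ : (ℕ → Bool) → (ℕ × ℕ → Bool) :=
    fun f p => decide (∀ j ∈ Finset.Ioc p.1 (p.1 + p.2), f j = false) with hΨ
  have hΨc : Continuous Ψ := by
    apply continuous_pibool
    intro p
    refine ⟨Finset.Ioc p.1 (p.1 + p.2), fun f g hfg => ?_⟩
    simp only [hΨ]
    congr 1
    refine propext ⟨fun h j hj => ?_, fun h j hj => ?_⟩
    · rw [← hfg j hj]; exact h j hj
    · rw [hfg j hj]; exact h j hj
  have hpre : Ψ ⁻¹' chiSet (FubiniProd ({∅} : Set (Set ℕ)) (FinIdeal ℕ)) =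
      {f : ℕ → Bool | {k : ℕ | f k = true}.Infinite} := by
    ext f
    simp only [Set.mem_preimage, chiSet, Set.mem_setOf_eq]
    rw [fubini_mem]
    constructor
    · intro hall
      apply Set.infinite_of_not_bddAbove
      rintro ⟨b, hb⟩
      have hcol : {k | Ψ f (b, k) = true}.Infinite := by
        have : ∀ k, Ψ f (b, k) = true := by
          intro k
          simp only [hΨ, decide_eq_true_eq]
          intro j hj
          rw [Finset.mem_Ioc] at hj
          cases hfj : f j with
          | false => rfl
          | true =>
            have : j ∈ {k | f k = true} := hfj
            have := hb this
            omega
        have : {k | Ψ f (b, k) = true} = Set.univ := Set.eq_univ_of_forall this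
        rw [this]
        exact Set.infinite_univ
      exact hcol (hall b)
    · intro hinf n
      obtain ⟨j, hj, hjn⟩ := hinf.exists_gt n
      refine Set.Finite.subset (Set.finite_Iio (j - n)) ?_
      intro k hk
      simp only [hΨ, Set.mem_setOf_eq, decide_eq_true_eq] at hk
      simp only [Set.mem_Iio]
      by_contra hc
      push_neg at hc
      have hjmem : j ∈ Finset.Ioc n (n + k) := Finset.mem_Ioc.mpr ⟨hjn, by omega⟩
      have := hk j hjmem
      rw [hj] at this
      exact absurd this (by simp)
  have h3 := sigma2_preimage h2 hΨc
  rw [hpre] at h3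
  exact suppInfinite_not_sigma2 hinj hrange h3

end hard

section lambda

variable {x : ℕ → (ℕ → Bool)} {W : Set (ℕ → Bool)}

lemma convAlong_const {y : ℕ → (ℕ → Bool)} {B : Set ℕ} {p η' : ℕ → Bool} (hB : B.Infinite)
    (hy : ∀ n ∈ B, y n = p) (h : ConvAlong y B η') : η' = p := by
  by_contra hne
  have hd : 0 < dist p η' := dist_pos.mpr (fun he => hne he.symm)
  obtain ⟨n, hnB, -, hball⟩ := convAlong_exists_index hB h
    (Metric.ball_mem_nhds η' hd) 0
  rw [hy n hnB, Metric.mem_ball] at hball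
  exact absurd hball (not_lt.mpr le_rfl)

lemma dense_seq (F : Set (ℕ → Bool)) (hne : F.Nonempty) :
    ∃ c : ℕ → (ℕ → Bool), (∀ i, c i ∈ F) ∧ ∀ g ∈ F, g ∈ closure (Set.range c) := by
  have : Nonempty F := hne.to_subtype
  obtain ⟨u, hu⟩ := TopologicalSpace.exists_dense_seq F
  refine ⟨fun i => (u i : ℕ → Bool), fun i => (u i).2, fun g hg => ?_⟩
  have h2 : (⟨g, hg⟩ : F) ∈ closure (Set.range u) := hu.closure_range ▸ Set.mem_univ _
  rw [closure_subtype] at h2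
  have heq : (Subtype.val '' (Set.range u)) = Set.range (fun i => (u i : ℕ → Bool)) := by
    rw [← Set.range_comp]; rfl
  rwa [heq] at h2

lemma limitFamily_of_notClosed (hinj : Function.Injective x)
    (hrange : Set.range x = {f : ℕ → Bool | {k : ℕ | f k = true}.Finite})
    (hW : ¬IsClosed W) :
    ∀ S ∈ SigmaClass (ℕ → Bool) 2, S ∈ LimitFamily ℕ (ℕ → Bool) (IdealW x W) := by
  classical
  intro S hS
  obtain ⟨v, hv, rfl⟩ := hS
  by_cases hSne : (⋃ k, v k).Nonempty
  swap
  · exact Or.inr (Set.not_nonempty_iff_eq_empty.mp hSne)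
  obtain ⟨p, hp⟩ := hSne
  obtain ⟨m₀, hm₀⟩ := Set.mem_iUnion.mp hp
  set F : ℕ → Set (ℕ → Bool) := fun m => v m ∪ v m₀ with hF
  have hFcl : ∀ m, IsClosed (F m) :=
    fun m => IsClosed.union (isOpen_compl_iff.mp (mem_sigma1.mp (hv m)))
      (isOpen_compl_iff.mp (mem_sigma1.mp (hv m₀)))
  have hFne : ∀ m, p ∈ F m := fun m => Or.inr hm₀
  have hFU : (⋃ m, F m) = ⋃ k, v k := by
    apply Set.Subset.antisymm
    · intro g hg
      obtain ⟨m, hm⟩ := Set.mem_iUnion.mp hg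
      rcases hm with h | h
      · exact Set.mem_iUnion.mpr ⟨m, h⟩
      · exact Set.mem_iUnion.mpr ⟨m₀, h⟩
    · intro g hg
      obtain ⟨k, hk⟩ := Set.mem_iUnion.mp hg
      exact Set.mem_iUnion.mpr ⟨k, Or.inl hk⟩
  choose c hc1 hc2 using fun m => dense_seq (F m) ⟨p, hFne m⟩
  set d : ℕ → ℕ → (ℕ → Bool) := fun m i => c m (Nat.unpair i).1 with hdd
  obtain ⟨η, w, e, hηW, hwW, hemono, hdisj, hconv, hdiag⟩ := exists_struct hinj hrange hW
  set y : ℕ → (ℕ → Bool) :=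
    fun n => if h : ∃ q : ℕ × ℕ, e q.1 q.2 = n then d h.choose.1 h.choose.2 else p with hy
  have hye : ∀ j i, y (e j i) = d j i := by
    intro j i
    have hex : ∃ q : ℕ × ℕ, e q.1 q.2 = e j i := ⟨(j, i), rfl⟩
    rw [hy]
    simp only [dif_pos hex]
    obtain ⟨h1, h2⟩ := hdisj _ _ _ _ hex.choose_spec
    rw [h1, h2]
  have hyout : ∀ n, (∀ j i, e j i ≠ n) → y n = p := by
    intro n hn
    rw [hy]
    have : ¬∃ q : ℕ × ℕ, e q.1 q.2 = n := by
      rintro ⟨q, hq⟩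
      exact hn q.1 q.2 hq
    simp only [dif_neg this]
  refine Or.inl ⟨y, ?_⟩
  apply Set.Subset.antisymm
  · -- S ⊆ Λ
    intro η' hη'
    obtain ⟨k, hk⟩ := Set.mem_iUnion.mp hη'
    have hη'F : η' ∈ F k := Or.inl hk
    have hstep : ∀ (t prev : ℕ), ∃ i, prev < i ∧ dist (d k i) η' < 1 / ((t : ℝ) + 1) := by
      intro t prev
      have h1 : η' ∈ closure (Set.range (c k)) := hc2 k η' hη'F
      obtain ⟨b, ⟨a, rfl⟩, hb⟩ := Metric.mem_closure_iff.mp h1 (1 / ((t : ℝ) + 1)) (by positivity)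
      refine ⟨Nat.pair a (prev + 1), ?_, ?_⟩
      · have := Nat.right_le_pair a (prev + 1)
        omega
      · rw [hdd]
        simp only [Nat.unpair_pair]
        rw [dist_comm]
        exact hb
    choose nxt hnxt1 hnxt2 using hstep
    set it : ℕ → ℕ := fun t => Nat.rec (nxt 0 0) (fun t' q => nxt (t' + 1) q) t with hit
    have hitmono : StrictMono it := by
      apply strictMono_nat_of_lt_succ
      intro t
      exact hnxt1 (t + 1) (it t)
    have hitdist : ∀ t, dist (d k (it t)) η' < 1 / ((t : ℝ) + 1) := by
      intro t
      cases t with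
      | zero => exact hnxt2 0 0
      | succ t' => exact hnxt2 (t' + 1) (it t')
    set u : ℕ → ℕ := fun t => e k (it t) with hu
    have humono : StrictMono u := (hemono k).comp hitmono
    refine ⟨Set.range u, ?_, Set.infinite_range_of_injective humono.injective, ?_⟩
    · refine not_mem_IdealW_of_witness (B := Set.range u) le_rfl
        (Set.infinite_range_of_injective humono.injective) ?_ (hwW k)
      refine convAlong_mono ?_ (hconv k)
      rintro n ⟨t, rfl⟩
      exact Set.mem_range_self (it t)
    · apply convAlong_of_strictMono humono
      rw [tendsto_iff_dist_tendsto_zero]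
      apply squeeze_zero (fun t => dist_nonneg) (g := fun t : ℕ => 1 / ((t : ℝ) + 1))
      · intro t
        show dist (y (e k (it t))) η' ≤ _
        rw [hye k (it t)]
        exact le_of_lt (hitdist t)
      · exact tendsto_one_div_add_atTop_nhds_zero_nat
  · -- Λ ⊆ S
    rintro η' ⟨A, hAI, hAinf, hAconv⟩
    by_cases h1 : (A \ ⋃ j, Set.range (e j)).Infinite
    · have hconst : ∀ n ∈ A \ ⋃ j, Set.range (e j), y n = p := by
        rintro n ⟨-, hn⟩
        refine hyout n ?_
        intro j i he
        exact hn (Set.mem_iUnion.mpr ⟨j, i, he⟩)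
      have := convAlong_const h1 hconst (convAlong_mono Set.diff_subset hAconv)
      rw [this]
      exact Set.mem_iUnion.mpr ⟨m₀, hm₀⟩
    · by_cases h2 : ∃ j, (A ∩ Set.range (e j)).Infinite
      · obtain ⟨j, hj⟩ := h2
        have hvals : y '' (A ∩ Set.range (e j)) ⊆ F j := by
          rintro g ⟨n, ⟨-, i, rfl⟩, rfl⟩
          rw [hye j i, hdd]
          exact hc1 j _
        have hmem : η' ∈ closure (y '' (A ∩ Set.range (e j))) :=
          mem_closure_of_convAlong hj (convAlong_mono Set.inter_subset_left hAconv)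
        have : η' ∈ F j := by
          rw [← (hFcl j).closure_eq]
          exact closure_mono hvals hmem
        rcases this with h | h
        · exact Set.mem_iUnion.mpr ⟨j, h⟩
        · exact Set.mem_iUnion.mpr ⟨m₀, h⟩
      ·
        exfalso
        apply hAI
        rw [mem_IdealW, Set.eq_empty_iff_forall_notMem]
        rintro η'' ⟨⟨B, hBA, hBinf, hBconv⟩, hη''W⟩
        push_neg at h2
        rw [Set.not_infinite] at h1
        set B₁ := B ∩ (⋃ j, Set.range (e j)) with hB₁
        have hB₁inf : B₁.Infinite := by
          intro hfin
          apply hBinf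
          have : B ⊆ B₁ ∪ (A \ ⋃ j, Set.range (e j)) := by
            intro n hn
            by_cases h : n ∈ ⋃ j, Set.range (e j)
            · exact Or.inl ⟨hn, h⟩
            · exact Or.inr ⟨hBA hn, h⟩
          exact (hfin.union h1).subset this
        have hB₁fin : ∀ j, (B₁ ∩ Set.range (e j)).Finite := by
          intro j
          refine Set.Finite.subset (h2 j) ?_
          rintro n ⟨⟨hnB, -⟩, hr⟩
          exact ⟨hBA hnB, hr⟩
        have hc1' : ConvAlong x B₁ η := hdiag B₁ Set.inter_subset_right hB₁fin
        have hc2' : ConvAlong x B₁ η'' := convAlong_mono Set.inter_subset_left hBconv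
        have : η'' = η := convAlong_unique hB₁inf hc2' hc1'
        rw [this] at hη''W
        exact hηW hη''W

lemma convAlong_exists_index2 {z y : ℕ → (ℕ → Bool)} {B : Set ℕ} {a b : ℕ → Bool}
    (hB : B.Infinite) (h1 : ConvAlong z B a) (h2 : ConvAlong y B b)
    {U1 U2 : Set (ℕ → Bool)} (hU1 : U1 ∈ nhds a) (hU2 : U2 ∈ nhds b) (m : ℕ) :
    ∃ n ∈ B, m ≤ n ∧ z n ∈ U1 ∧ y n ∈ U2 := by
  by_contra hc
  push_neg at hc
  have : B ⊆ {n ∈ B | z n ∉ U1} ∪ {n ∈ B | y n ∉ U2} ∪ {n | n < m} := by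
    intro n hn
    by_cases hm : m ≤ n
    · by_cases hz : z n ∈ U1
      · exact Or.inl (Or.inr ⟨hn, fun hyn => hc n hn hm hz hyn⟩)
      · exact Or.inl (Or.inl ⟨hn, hz⟩)
    · exact Or.inr (by simp only [Set.mem_setOf_eq]; omega)
  exact hB ((((h1 U1 hU1).union (h2 U2 hU2)).union (Set.finite_lt_nat m)).subset this)

lemma lambdaSet_closed_of_closed (hWc : IsClosed W) (y : ℕ → (ℕ → Bool)) :
    IsClosed (LambdaSet y (IdealW x W)) := by
  apply IsSeqClosed.isClosed
  intro u η hu hconvη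
  choose A hAI hAinf hAconv using hu
  have hwit : ∀ j, ∃ g, g ∈ W ∧ ∃ B ⊆ A j, B.Infinite ∧ ConvAlong x B g := by
    intro j
    have := hAI j
    rw [mem_IdealW] at this
    rcases Set.eq_empty_or_nonempty (LimSet x (A j) ∩ W) with h | h
    · exact absurd h this
    · obtain ⟨g, ⟨B, hB1, hB2, hB3⟩, hgW⟩ := h
      exact ⟨g, hgW, B, hB1, hB2, hB3⟩
  choose w hwW B hBA hBinf hBconv using hwit
  obtain ⟨wl, hwlW, ψ, hψ, hψconv⟩ := (hWc.isCompact).tendsto_subseq hwW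
  have hstep : ∀ (t prev : ℕ), ∃ n, n ∈ B (ψ t) ∧ prev < n ∧
      dist (x n) (w (ψ t)) < 1 / ((t : ℝ) + 1) ∧ dist (y n) (u (ψ t)) < 1 / ((t : ℝ) + 1) := by
    intro t prev
    have hr : (0:ℝ) < 1 / ((t : ℝ) + 1) := by positivity
    obtain ⟨n, hn1, hn2, hn3, hn4⟩ := convAlong_exists_index2 (hBinf (ψ t)) (hBconv (ψ t))
      (convAlong_mono (hBA (ψ t)) (hAconv (ψ t)))
      (Metric.ball_mem_nhds _ hr) (Metric.ball_mem_nhds _ hr) (prev + 1)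
    exact ⟨n, hn1, by omega, Metric.mem_ball.mp hn3, Metric.mem_ball.mp hn4⟩
  choose nxt hnxt1 hnxt2 hnxt3 hnxt4 using hstep
  set ns : ℕ → ℕ := fun t => Nat.rec (nxt 0 0) (fun t' q => nxt (t' + 1) q) t with hns
  have hns1 : ∀ t, ns t ∈ B (ψ t) := by
    intro t; cases t with
    | zero => exact hnxt1 0 0
    | succ t' => exact hnxt1 (t' + 1) (ns t')
  have hns3 : ∀ t, dist (x (ns t)) (w (ψ t)) < 1 / ((t : ℝ) + 1) := by
    intro t; cases t with
    | zero => exact hnxt3 0 0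
    | succ t' => exact hnxt3 (t' + 1) (ns t')
  have hns4 : ∀ t, dist (y (ns t)) (u (ψ t)) < 1 / ((t : ℝ) + 1) := by
    intro t; cases t with
    | zero => exact hnxt4 0 0
    | succ t' => exact hnxt4 (t' + 1) (ns t')
  have hnsmono : StrictMono ns := by
    apply strictMono_nat_of_lt_succ
    intro t
    exact hnxt2 (t + 1) (ns t)
  have hzero : Filter.Tendsto (fun t : ℕ => 1 / ((t : ℝ) + 1)) Filter.atTop (𝓝 0) :=
    tendsto_one_div_add_atTop_nhds_zero_nat
  have hconvx : Filter.Tendsto (fun t => x (ns t)) Filter.atTop (𝓝 wl) := by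
    rw [tendsto_iff_dist_tendsto_zero]
    apply squeeze_zero (fun t => dist_nonneg)
      (g := fun t : ℕ => 1 / ((t : ℝ) + 1) + dist (w (ψ t)) wl)
    · intro t
      calc dist (x (ns t)) wl ≤ dist (x (ns t)) (w (ψ t)) + dist (w (ψ t)) wl :=
          dist_triangle _ _ _
        _ ≤ _ := by have := hns3 t; linarith
    · simpa using hzero.add (tendsto_iff_dist_tendsto_zero.mp hψconv)
  have hconvy : Filter.Tendsto (fun t => y (ns t)) Filter.atTop (𝓝 η) := by
    rw [tendsto_iff_dist_tendsto_zero]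
    apply squeeze_zero (fun t => dist_nonneg)
      (g := fun t : ℕ => 1 / ((t : ℝ) + 1) + dist (u (ψ t)) η)
    · intro t
      calc dist (y (ns t)) η ≤ dist (y (ns t)) (u (ψ t)) + dist (u (ψ t)) η :=
          dist_triangle _ _ _
        _ ≤ _ := by have := hns4 t; linarith
    · have : Filter.Tendsto (fun t => u (ψ t)) Filter.atTop (𝓝 η) :=
        hconvη.comp hψ.tendsto_atTop
      simpa using hzero.add (tendsto_iff_dist_tendsto_zero.mp this)
  refine ⟨Set.range ns, ?_, Set.infinite_range_of_injective hnsmono.injective, ?_⟩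
  · exact not_mem_IdealW_of_witness le_rfl (Set.infinite_range_of_injective hnsmono.injective)
      (convAlong_of_strictMono hnsmono hconvx) hwlW
  · exact convAlong_of_strictMono hnsmono hconvy

lemma notClosed_of_limitFamily (hinj : Function.Injective x)
    (hrange : Set.range x = {f : ℕ → Bool | {k : ℕ | f k = true}.Finite})
    (hlf : ∀ S ∈ SigmaClass (ℕ → Bool) 2, S ∈ LimitFamily ℕ (ℕ → Bool) (IdealW x W)) :
    ¬IsClosed W := by
  intro hWc
  have hS : Set.range x ∈ SigmaClass (ℕ → Bool) 2 := by
    refine ⟨fun k => {x k}, fun k => mem_sigma1.mpr isClosed_singleton.isOpen_compl, ?_⟩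
    exact Set.range_eq_iUnion x
  have := hlf _ hS
  rcases this with ⟨y, hy⟩ | h
  · -- range x would be closed
    have hcl : IsClosed (Set.range x) := hy ▸ lambdaSet_closed_of_closed hWc y
    -- but range x is dense and proper
    have hdense : closure (Set.range x) = Set.univ := by
      apply Set.eq_univ_of_forall
      intro g
      rw [mem_closure_iff]
      intro U hU hgU
      obtain ⟨n, hn⟩ := (infinite_x_mem hinj hrange hU hgU).nonempty
      exact ⟨x n, hn, Set.mem_range_self n⟩
    rw [hcl.closure_eq] at hdense
    have : (fun _ => true : ℕ → Bool) ∈ Set.range x := hdense ▸ Set.mem_univ _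
    rw [hrange] at this
    simp only [Set.mem_setOf_eq] at this
    have : ({k : ℕ | True} : Set ℕ).Finite := by simpa using this
    rw [Set.setOf_true] at this
    exact Set.infinite_univ this
  · -- range x = ∅, impossible
    have : x 0 ∈ (∅ : Set (ℕ → Bool)) := h ▸ Set.mem_range_self 0
    exact this

end lambda

end S15

/-- for nonempty `W ⊆ {0,1}^ω` with `I_W` having the hereditary Baire property,
the following are equivalent: `W` not closed; `∅×Fin ≤_RB I_W`; `I_W` is `Π⁰₃`-hard;
every `Σ⁰₂` subset of the Cantor space belongs to `𝓛(I_W)`. -/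
theorem stmt15 (x : ℕ → (ℕ → Bool)) (hinj : Function.Injective x)
    (hrange : Set.range x = {f : ℕ → Bool | {k : ℕ | f k = true}.Finite})
    (hzero : x 0 = fun _ => false)
    (W : Set (ℕ → Bool)) (hW : W.Nonempty) (hBP : HereditaryBP (IdealW x W)) :
    (¬IsClosed W ↔ RudinBlassLE (FubiniProd ({∅} : Set (Set ℕ)) (FinIdeal ℕ)) (IdealW x W)) ∧
    (¬IsClosed W ↔ Pi03Hard (chiSet (IdealW x W))) ∧
    (¬IsClosed W ↔ ∀ S ∈ SigmaClass (ℕ → Bool) 2,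
      S ∈ LimitFamily ℕ (ℕ → Bool) (IdealW x W)) := by
  refine ⟨⟨fun h => S15.rb_of_notClosed hinj hrange h,
           fun h => S15.notClosed_of_rb hinj hrange hW h⟩,
          ⟨fun h => S15.pi03hard_of_rb (S15.rb_of_notClosed hinj hrange h),
           fun h => S15.notClosed_of_pi03Hard hinj hrange hW h⟩,
          ⟨fun h => S15.limitFamily_of_notClosed hinj hrange h,
           fun h => S15.notClosed_of_limitFamily hinj hrange h⟩⟩
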